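/- Let (z^k)_{k≥0} be a sequence in ℝ^N, J : ℝ^N → ℝ, J* ∈ ℝ, c > 0, ϱ > 0, η ∈ (0, +∞], and l ∈ ℕ. Let φ : [0, η) → ℝ be continuous and concave with φ(0) = 0, continuously differentiable on (0, η) with φ'(t) > 0 for all t ∈ (0, η). Assume: (a) J(z^{k+1}) ≤ J(z^k) − c‖z^{k+1} − z^k‖² for all k ≥ 0; and (b) for every k ≥ l one has 0 < J(z^k) − J* < η and φ'(J(z^k) − J*) · ϱ ‖z^k − z^{k−1}‖ ≥ 1. Then the sequence has finite length, ∑_{k=0}^{∞} ‖z^{k+1} − z^k‖ < +∞, and consequently (z^k) is a Cauchy sequence and converges to some point z* ∈ ℝ^N. -/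

import Mathlib

/-- Global convergence under the Kurdyka–Łojasiewicz property:
sufficient decrease plus the KŁ/relative-error inequality from some index `l` onwards
imply finite length of the iterate sequence, hence convergence.  The extended bound
`η ∈ (0, +∞]` is modelled as `η : EReal` with `0 < η`, and `[0, η)`, `(0, η)` as the
corresponding sets of reals. -/
theorem stmt_10 {N : ℕ} (z : ℕ → EuclideanSpace ℝ (Fin N))
    (J : EuclideanSpace ℝ (Fin N) → ℝ) (Jstar : ℝ) (c ϱ : ℝ) (hc : 0 < c) (hϱ : 0 < ϱ)
    (η : EReal) (hη : 0 < η) (l : ℕ)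
    (φ φ' : ℝ → ℝ)
    (hφcont : ContinuousOn φ {u : ℝ | 0 ≤ u ∧ (u : EReal) < η})
    (hφ0 : φ 0 = 0)
    (hconc : ConcaveOn ℝ {u : ℝ | 0 ≤ u ∧ (u : EReal) < η} φ)
    (hderiv : ∀ u : ℝ, 0 < u → (u : EReal) < η → HasDerivAt φ (φ' u) u)
    (hφ'cont : ContinuousOn φ' {u : ℝ | 0 < u ∧ (u : EReal) < η})
    (hφ'pos : ∀ u : ℝ, 0 < u → (u : EReal) < η → 0 < φ' u)
    -- (a) sufficient decrease
    (hdec : ∀ k, J (z (k + 1)) ≤ J (z k) - c * ‖z (k + 1) - z k‖ ^ 2)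
    -- (b) KŁ inequality combined with the relative-error bound
    (hkl : ∀ k, l ≤ k →
      0 < J (z k) - Jstar ∧ ((J (z k) - Jstar : ℝ) : EReal) < η ∧
        1 ≤ φ' (J (z k) - Jstar) * (ϱ * ‖z k - z (k - 1)‖)) :
    Summable (fun k => ‖z (k + 1) - z k‖)
    ∧ CauchySeq z
    ∧ ∃ zstar, Filter.Tendsto z Filter.atTop (nhds zstar) := by
  set S : Set ℝ := {u : ℝ | 0 ≤ u ∧ (u : EReal) < η} with hS
  set a : ℕ → ℝ := fun k => ‖z (k + 1) - z k‖ with ha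
  set r : ℕ → ℝ := fun k => J (z k) - Jstar with hr
  have ha0 : ∀ k, 0 ≤ a k := fun k => norm_nonneg _
  -- S is convex
  have hSconv : Convex ℝ S := by
    rw [convex_iff_ordConnected]
    constructor
    intro x hx y hy u hu
    exact ⟨hx.1.trans hu.1, lt_of_le_of_lt (EReal.coe_le_coe_iff.2 hu.2) hy.2⟩
  -- interior facts
  have hint : ∀ x ∈ interior S, 0 < x ∧ (x : EReal) < η := by
    intro x hx
    have hxS : x ∈ S := interior_subset hx
    have : x ∈ interior (Set.Ici (0:ℝ)) :=
      interior_mono (fun u hu => hu.1) hx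
    rw [interior_Ici] at this
    exact ⟨this, hxS.2⟩
  -- φ is monotone on S
  have hmono : MonotoneOn φ S := by
    apply monotoneOn_of_deriv_nonneg hSconv hφcont
    · intro x hx
      exact ((hderiv x (hint x hx).1 (hint x hx).2).differentiableAt).differentiableWithinAt
    · intro x hx
      rw [(hderiv x (hint x hx).1 (hint x hx).2).deriv]
      exact (hφ'pos x (hint x hx).1 (hint x hx).2).le
  have h0S : (0:ℝ) ∈ S := by
    refine ⟨le_refl _, ?_⟩
    simpa using hη
  have hrS : ∀ k, l ≤ k → r k ∈ S := fun k hk => ⟨(hkl k hk).1.le, (hkl k hk).2.1⟩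
  -- φ (r k) ≥ 0
  have hφr0 : ∀ k, l ≤ k → 0 ≤ φ (r k) := by
    intro k hk
    have := hmono h0S (hrS k hk) (hkl k hk).1.le
    rwa [hφ0] at this
  -- sufficient decrease in terms of r
  have hdec' : ∀ k, c * a k ^ 2 ≤ r k - r (k + 1) := by
    intro k
    have := hdec k
    simp only [hr]
    linarith
  have hrle : ∀ k, r (k + 1) ≤ r k := by
    intro k
    have h1 := hdec' k
    nlinarith [sq_nonneg (a k), hc]
  -- the key per-step estimate
  have key : ∀ k, l + 1 ≤ k →
      a k ≤ (1/2) * a (k - 1) + (ϱ/(2*c)) * (φ (r k) - φ (r (k + 1))) := by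
    intro k hk
    have hkl' : l ≤ k := le_trans (Nat.le_succ l) hk
    have hkl1 : l ≤ k + 1 := le_trans hkl' (Nat.le_succ k)
    have hD0 : 0 ≤ φ (r k) - φ (r (k + 1)) := by
      have := hmono (hrS (k+1) hkl1) (hrS k hkl') (hrle k)
      linarith
    rcases eq_or_lt_of_le (ha0 k) with h0 | h0
    · rw [← h0]
      have : 0 ≤ (ϱ/(2*c)) * (φ (r k) - φ (r (k + 1))) :=
        mul_nonneg (by positivity) hD0
      nlinarith [ha0 (k-1)]
    · -- a k > 0, so r (k+1) < r k
      have hlt : r (k + 1) < r k := by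
        have h1 := hdec' k
        have h2 : 0 < c * a k ^ 2 := mul_pos hc (pow_pos h0 2)
        linarith
      have hdφ : HasDerivAt φ (φ' (r k)) (r k) :=
        hderiv (r k) (hkl k hkl').1 (hkl k hkl').2.1
      have htan : φ' (r k) * (r k - r (k + 1)) ≤ φ (r k) - φ (r (k + 1)) := by
        have hs := hconc.le_slope_of_hasDerivAt (hrS (k+1) hkl1) (hrS k hkl') hlt hdφ
        rw [slope_def_field] at hs
        have hpos : 0 < r k - r (k + 1) := sub_pos.2 hlt
        calc φ' (r k) * (r k - r (k + 1))
            ≤ ((φ (r k) - φ (r (k + 1))) / (r k - r (k + 1))) * (r k - r (k + 1)) :=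
              mul_le_mul_of_nonneg_right hs hpos.le
          _ = φ (r k) - φ (r (k + 1)) := div_mul_cancel₀ _ hpos.ne'
      have hp : 0 < φ' (r k) := hφ'pos (r k) (hkl k hkl').1 (hkl k hkl').2.1
      have hKL : 1 ≤ φ' (r k) * (ϱ * a (k - 1)) := by
        have hk1 : k - 1 + 1 = k := by omega
        have := (hkl k hkl').2.2
        simpa only [ha, hk1] using this
      -- combine: c * a k ^ 2 ≤ ϱ * (φ (r k) - φ (r (k+1))) * a (k-1)
      have hcomb : c * a k ^ 2 ≤ ϱ * (φ (r k) - φ (r (k + 1))) * a (k - 1) := by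
        have h1 : φ' (r k) * (c * a k ^ 2) ≤ φ' (r k) * (r k - r (k + 1)) :=
          mul_le_mul_of_nonneg_left (hdec' k) hp.le
        have h2 : (φ (r k) - φ (r (k + 1))) * 1 ≤
            (φ (r k) - φ (r (k + 1))) * (φ' (r k) * (ϱ * a (k - 1))) :=
          mul_le_mul_of_nonneg_left hKL hD0
        nlinarith
      -- AM-GM
      have hfinal : 2 * c * a k ≤ c * a (k - 1) + ϱ * (φ (r k) - φ (r (k + 1))) := by
        have hh1 : (2 * c * a k) ^ 2 ≤ (c * a (k - 1) + ϱ * (φ (r k) - φ (r (k + 1)))) ^ 2 := by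
          nlinarith [sq_nonneg (c * a (k - 1) - ϱ * (φ (r k) - φ (r (k + 1)))), ha0 (k - 1)]
        have hh2 : 0 ≤ 2 * c * a k := by positivity
        have hh3 : 0 ≤ c * a (k - 1) + ϱ * (φ (r k) - φ (r (k + 1))) := by
          have := ha0 (k - 1)
          have := mul_nonneg hϱ.le hD0
          nlinarith
        exact (pow_le_pow_iff_left₀ hh2 hh3 (by norm_num)).mp hh1
      have heq : (c * a (k - 1) + ϱ * (φ (r k) - φ (r (k + 1)))) / (2 * c)
          = 1/2 * a (k - 1) + ϱ/(2*c) * (φ (r k) - φ (r (k + 1))) := by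
        field_simp
      rw [← heq, le_div_iff₀ (by positivity : (0:ℝ) < 2 * c)]
      linarith
  set m := l + 1 with hm
  -- bounded partial sums
  have hbound : ∀ n, ∑ k ∈ Finset.range n, a (m + k) ≤ a l + (ϱ/c) * φ (r m) := by
    intro n
    set T := ∑ k ∈ Finset.range n, a (m + k) with hT
    have hstep : T ≤ ∑ k ∈ Finset.range n,
        ((1/2) * a (m + k - 1) + (ϱ/(2*c)) * (φ (r (m + k)) - φ (r (m + k + 1)))) := by
      apply Finset.sum_le_sum
      intro k _
      exact key (m + k) (Nat.le_add_right m k)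
    have hshift : ∑ k ∈ Finset.range n, a (m + k - 1) ≤ a l + T := by
      have heq : ∀ k, a (m + k - 1) = a (l + k) := by
        intro k; congr 1; omega
      simp only [heq]
      cases n with
      | zero => simpa [hT] using ha0 l
      | succ n' =>
        rw [Finset.sum_range_succ']
        have h1 : ∀ i, a (l + (i + 1)) = a (m + i) := by
          intro i; congr 1; omega
        simp only [h1, add_zero]
        have h2 : ∑ i ∈ Finset.range n', a (m + i) ≤ T := by
          apply Finset.sum_le_sum_of_subset_of_nonneg
          · exact Finset.range_mono (Nat.le_succ n')
          · intro i _ _; exact ha0 _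
        linarith
    have htel : ∑ k ∈ Finset.range n, (φ (r (m + k)) - φ (r (m + k + 1)))
        = φ (r m) - φ (r (m + n)) := by
      have := Finset.sum_range_sub' (fun k => φ (r (m + k))) n
      simpa [add_assoc] using this
    have hsum2 : ∑ k ∈ Finset.range n,
        ((1/2) * a (m + k - 1) + (ϱ/(2*c)) * (φ (r (m + k)) - φ (r (m + k + 1))))
        = (1/2) * (∑ k ∈ Finset.range n, a (m + k - 1))
          + (ϱ/(2*c)) * (φ (r m) - φ (r (m + n))) := by
      rw [Finset.sum_add_distrib, ← Finset.mul_sum, ← Finset.mul_sum, htel]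
    have hφmn : 0 ≤ φ (r (m + n)) := hφr0 (m + n) (by omega)
    have hc2 : (0:ℝ) < ϱ/(2*c) := by positivity
    have : T ≤ (1/2) * (a l + T) + (ϱ/(2*c)) * (φ (r m) - φ (r (m + n))) := by
      rw [hsum2] at hstep
      have := mul_le_mul_of_nonneg_left hshift (by norm_num : (0:ℝ) ≤ 1/2)
      linarith
    have hx : (ϱ/(2*c)) * (φ (r m) - φ (r (m + n))) ≤ (ϱ/(2*c)) * φ (r m) := by
      apply mul_le_mul_of_nonneg_left _ hc2.le
      linarith
    have hdiv : (ϱ/c) = 2 * (ϱ/(2*c)) := by field_simp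
    rw [hdiv]
    linarith
  -- summability
  have hsumm : Summable a := by
    have h1 : Summable (fun k => a (k + m)) := by
      have : Summable (fun k => a (m + k)) :=
        summable_of_sum_range_le (fun n => ha0 _) hbound
      simpa [add_comm] using this
    exact (summable_nat_add_iff m).mp h1
  refine ⟨hsumm, ?_, ?_⟩
  · apply cauchySeq_of_summable_dist
    apply hsumm.congr
    intro n
    rw [dist_eq_norm, norm_sub_rev]
  · apply cauchySeq_tendsto_of_complete
    apply cauchySeq_of_summable_dist
    apply hsumm.congr
    intro n
    rw [dist_eq_norm, norm_sub_rev]
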